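/- arXiv:quant-ph/0508164 — 4 statements merged into one kernel-verified Lean document; each statement's English description precedes it below -/
import Mathlib

section
/- Let m, n ≥ 1, let U be a unitary matrix indexed by Fin m × Fin n with complex entries, and let j : Fin m. Then the set S^j := { ψ : Fin m × Fin n → ℂ | the partial trace over the second factor of U|ψ⟩⟨ψ|U† equals ‖ψ‖² • |e_j⟩⟨e_j| } is exactly the preimage under U of the linear subspace { f | ∃ φ : Fin n → ℂ, ∀ i k, f(i,k) = e_j(i) · φ(k) }; in particular S^j is a linear subspace of dimension n. (This is the paper's claim that each set S_x^j is an affine space for which a basis may be computed for any given local unitary U.) -/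
open Matrix BigOperators

/-- Partial trace over the second tensor factor. -/
noncomputable def ptr2 {m n : ℕ} (ρ : Matrix (Fin m × Fin n) (Fin m × Fin n) ℂ) :
    Matrix (Fin m) (Fin m) ℂ :=
  fun i i' => ∑ k : Fin n, ρ (i, k) (i', k)

/-- Outer product |ψ⟩⟨φ|. -/
def outer {ι : Type*} (ψ φ : ι → ℂ) : Matrix ι ι ℂ :=
  fun a b => ψ a * star (φ b)

/-- Standard basis vector e_j. -/
def stdBasis {m : ℕ} (j : Fin m) : Fin m → ℂ :=
  fun i => if i = j then 1 else 0

lemma conj_outer {m n : ℕ} (U : Matrix (Fin m × Fin n) (Fin m × Fin n) ℂ)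
    (ψ : Fin m × Fin n → ℂ) :
    U * outer ψ ψ * Uᴴ = outer (U.mulVec ψ) (U.mulVec ψ) := by
  ext a b
  simp only [Matrix.mul_apply, outer, Matrix.conjTranspose_apply, Matrix.mulVec, dotProduct,
    star_sum, star_mul', Finset.sum_mul, Finset.mul_sum]
  refine Finset.sum_congr rfl fun d _ => Finset.sum_congr rfl fun c _ => ?_
  ring

lemma norm_pres {m n : ℕ} (U : Matrix (Fin m × Fin n) (Fin m × Fin n) ℂ)
    (hU : Uᴴ * U = 1) (ψ : Fin m × Fin n → ℂ) :
    ∑ x, (U.mulVec ψ) x * star ((U.mulVec ψ) x) = ∑ x, ψ x * star (ψ x) := by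
  have h1 : star (U.mulVec ψ) ⬝ᵥ (U.mulVec ψ) = star ψ ⬝ᵥ ψ := by
    rw [Matrix.star_mulVec, Matrix.dotProduct_mulVec, Matrix.vecMul_vecMul, hU,
      Matrix.vecMul_one]
  simpa [dotProduct, mul_comm] using h1

noncomputable def Wsub (m n : ℕ) (j : Fin m) : Submodule ℂ (Fin m × Fin n → ℂ) where
  carrier := {f | ∀ (i : Fin m) (k : Fin n), i ≠ j → f (i, k) = 0}
  add_mem' := fun hf hg i k h => by simp [hf i k h, hg i k h]
  zero_mem' := fun i k h => rfl
  smul_mem' := fun c f hf i k h => by simp [hf i k h]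

noncomputable def Wequiv (m n : ℕ) (j : Fin m) : Wsub m n j ≃ₗ[ℂ] (Fin n → ℂ) where
  toFun f := fun k => f.1 (j, k)
  invFun φ := ⟨fun p => if p.1 = j then φ p.2 else 0, fun i k h => by simp [h]⟩
  left_inv := fun ⟨f, hf⟩ => by
    ext ⟨i, k⟩
    by_cases h : i = j
    · subst h; simp
    · simp [h, hf i k h]
  right_inv := fun φ => by ext k; simp
  map_add' := fun f g => rfl
  map_smul' := fun c f => rfl

lemma key {m n : ℕ} (U : Matrix (Fin m × Fin n) (Fin m × Fin n) ℂ) (hU : Uᴴ * U = 1)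
    (j : Fin m) (ψ : Fin m × Fin n → ℂ) :
    (ptr2 (U * outer ψ ψ * Uᴴ) =
        (∑ x : Fin m × Fin n, ‖ψ x‖ ^ 2 : ℝ) • outer (_root_.stdBasis j) (_root_.stdBasis j)) ↔
      ∀ (i : Fin m) (k : Fin n), i ≠ j → U.mulVec ψ (i, k) = 0 := by
  rw [conj_outer]
  set g := U.mulVec ψ with hg
  have hc : ((∑ x : Fin m × Fin n, ‖ψ x‖ ^ 2 : ℝ) : ℂ) = ∑ x, g x * star (g x) := by
    rw [norm_pres U hU ψ]
    push_cast
    refine Finset.sum_congr rfl fun x _ => ?_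
    rw [Complex.star_def, Complex.mul_conj]
    norm_cast
    rw [← Complex.sq_norm]
  constructor
  · intro h i k hij
    have h2 := congrFun (congrFun h i) i
    have hz : _root_.stdBasis j i = 0 := if_neg hij
    simp only [ptr2, outer, Matrix.smul_apply, hz, zero_mul, smul_zero] at h2
    have h3 : ∑ k : Fin n, (Complex.normSq (g (i, k)) : ℝ) = 0 := by
      have h4 := congrArg Complex.re h2
      simpa [Complex.star_def, Complex.mul_conj, Complex.re_sum] using h4
    have h4 := (Finset.sum_eq_zero_iff_of_nonneg (fun k _ => Complex.normSq_nonneg _)).1 h3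
    exact Complex.normSq_eq_zero.mp (h4 k (Finset.mem_univ k))
  · intro h
    ext i i'
    simp only [ptr2, outer, Matrix.smul_apply, Complex.real_smul, _root_.stdBasis]
    by_cases hi : i = j
    · by_cases hi' : i' = j
      · subst hi; subst hi'
        rw [hc, Fintype.sum_prod_type,
          Fintype.sum_eq_single i' (fun b hb => Finset.sum_eq_zero fun k _ => by
            simp [h b k hb])]
        simp
      · have h0 : ∀ k : Fin n, g (i', k) = 0 := fun k => h i' k hi'
        simp [h0, hi']
    · have h0 : ∀ k : Fin n, g (i, k) = 0 := fun k => h i k hi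
      simp [h0, hi]


theorem stmt_1 {m n : ℕ} (hm : 1 ≤ m) (hn : 1 ≤ n)
    (U : Matrix (Fin m × Fin n) (Fin m × Fin n) ℂ) (hU : Uᴴ * U = 1)
    (j : Fin m)
    (S : Set (Fin m × Fin n → ℂ))
    (hS : S = { ψ | ptr2 (U * outer ψ ψ * Uᴴ) =
        (∑ x : Fin m × Fin n, ‖ψ x‖ ^ 2 : ℝ) • outer (stdBasis j) (stdBasis j) }) :
    S = (fun ψ => U.mulVec ψ) ⁻¹'
        { f | ∃ φ : Fin n → ℂ, ∀ (i : Fin m) (k : Fin n), f (i, k) = stdBasis j i * φ k } ∧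
      ∃ V : Submodule ℂ (Fin m × Fin n → ℂ), (V : Set (Fin m × Fin n → ℂ)) = S ∧
        Module.finrank ℂ V = n := by
  have hkey : ∀ ψ, ψ ∈ S ↔ ∀ (i : Fin m) (k : Fin n), i ≠ j → U.mulVec ψ (i, k) = 0 := by
    intro ψ
    rw [hS]
    exact key U hU j ψ
  have hUU : U * Uᴴ = 1 := mul_eq_one_comm.mp hU
  constructor
  · ext ψ
    rw [hkey ψ]
    simp only [Set.mem_preimage, Set.mem_setOf_eq]
    constructor
    · intro hψ
      refine ⟨fun k => U.mulVec ψ (j, k), fun i k => ?_⟩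
      by_cases hij : i = j
      · subst hij; simp [_root_.stdBasis]
      · simp [_root_.stdBasis, hij, hψ i k hij]
    · rintro ⟨φ, hφ⟩ i k hij
      rw [hφ i k]
      simp [_root_.stdBasis, hij]
  · let e : (Fin m × Fin n → ℂ) ≃ₗ[ℂ] (Fin m × Fin n → ℂ) :=
      LinearEquiv.ofLinear U.mulVecLin Uᴴ.mulVecLin
        (by rw [← Matrix.mulVecLin_mul, hUU, Matrix.mulVecLin_one])
        (by rw [← Matrix.mulVecLin_mul, hU, Matrix.mulVecLin_one])
    refine ⟨(Wsub m n j).comap (e : (Fin m × Fin n → ℂ) →ₗ[ℂ] (Fin m × Fin n → ℂ)), ?_, ?_⟩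
    · ext ψ
      simp only [SetLike.mem_coe, Submodule.mem_comap]
      rw [hkey ψ]
      exact Iff.rfl
    · rw [LinearEquiv.finrank_eq (LinearEquiv.ofSubmodule' e (Wsub m n j)),
        LinearEquiv.finrank_eq (Wequiv m n j), Module.finrank_pi, Fintype.card_fin]
end

section
/- Let a, b, c ≥ 1 and let ψ : Fin a × Fin b × Fin c → ℂ be a unit vector. Let j₁ : Fin a and j₂ : Fin b. Suppose the partial trace of |ψ⟩⟨ψ| onto the first factor (tracing out factors 2 and 3) equals |e_{j₁}⟩⟨e_{j₁}|, and the partial trace onto the second factor (tracing out factors 1 and 3) equals |e_{j₂}⟩⟨e_{j₂}|. Then the partial trace onto the first two factors (tracing out factor 3) equals the outer product |e_{j₁} ⊗ e_{j₂}⟩⟨e_{j₁} ⊗ e_{j₂}|, where (e_{j₁} ⊗ e_{j₂})(i,k) = e_{j₁}(i)·e_{j₂}(k). (This is the paper's claim that the set S_A^j of states mapping to the basis state |j⟩ = |j₁,…,j_n⟩ on a finite region A is the intersection of the single-cell sets S_{x_k}^{j_k}.) -/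
open Matrix BigOperators

/-- Partial trace onto the first factor (tracing out factors 2 and 3). -/
noncomputable def ptrFst {a b c : ℕ}
    (ρ : Matrix (Fin a × Fin b × Fin c) (Fin a × Fin b × Fin c) ℂ) :
    Matrix (Fin a) (Fin a) ℂ :=
  fun i i' => ∑ k : Fin b, ∑ l : Fin c, ρ (i, k, l) (i', k, l)

/-- Partial trace onto the second factor (tracing out factors 1 and 3). -/
noncomputable def ptrSnd {a b c : ℕ}
    (ρ : Matrix (Fin a × Fin b × Fin c) (Fin a × Fin b × Fin c) ℂ) :
    Matrix (Fin b) (Fin b) ℂ :=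
  fun k k' => ∑ i : Fin a, ∑ l : Fin c, ρ (i, k, l) (i, k', l)

/-- Partial trace onto the first two factors (tracing out factor 3). -/
noncomputable def ptrFstSnd {a b c : ℕ}
    (ρ : Matrix (Fin a × Fin b × Fin c) (Fin a × Fin b × Fin c) ℂ) :
    Matrix (Fin a × Fin b) (Fin a × Fin b) ℂ :=
  fun p q => ∑ l : Fin c, ρ (p.1, p.2, l) (q.1, q.2, l)

theorem stmt_3 {a b c : ℕ} (ha : 1 ≤ a) (hb : 1 ≤ b) (hc : 1 ≤ c)
    (ψ : Fin a × Fin b × Fin c → ℂ)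
    (hψ : ∑ x : Fin a × Fin b × Fin c, ‖ψ x‖ ^ 2 = 1)
    (j₁ : Fin a) (j₂ : Fin b)
    (h₁ : ptrFst (outer ψ ψ) = outer (stdBasis j₁) (stdBasis j₁))
    (h₂ : ptrSnd (outer ψ ψ) = outer (stdBasis j₂) (stdBasis j₂)) :
    ptrFstSnd (outer ψ ψ) =
      outer (fun p : Fin a × Fin b => stdBasis j₁ p.1 * stdBasis j₂ p.2)
            (fun p : Fin a × Fin b => stdBasis j₁ p.1 * stdBasis j₂ p.2) := by
  have mulstar : ∀ z : ℂ, z * star z = ((‖z‖ : ℂ)) ^ 2 := by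
    intro z
    rw [Complex.star_def, Complex.mul_conj']
  have keysum : ∀ i : Fin a, ((∑ k : Fin b, ∑ l : Fin c, ‖ψ (i,k,l)‖ ^ 2 : ℝ) : ℂ) =
      (outer (_root_.stdBasis j₁) (_root_.stdBasis j₁)) i i := by
    intro i
    have h := congrFun (congrFun h₁ i) i
    rw [← h]
    simp only [ptrFst, outer]
    push_cast
    congr 1; ext k; congr 1; ext l
    exact (mulstar _).symm
  have keysum2 : ∀ k : Fin b, ((∑ i : Fin a, ∑ l : Fin c, ‖ψ (i,k,l)‖ ^ 2 : ℝ) : ℂ) =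
      (outer (_root_.stdBasis j₂) (_root_.stdBasis j₂)) k k := by
    intro k
    have h := congrFun (congrFun h₂ k) k
    rw [← h]
    simp only [ptrSnd, outer]
    push_cast
    congr 1; ext i; congr 1; ext l
    exact (mulstar _).symm
  have key1 : ∀ i k l, i ≠ j₁ → ψ (i,k,l) = 0 := by
    intro i k l hi
    have h := keysum i
    simp only [outer, _root_.stdBasis, if_neg hi, zero_mul, Complex.ofReal_eq_zero] at h
    have hnn : ∀ k ∈ Finset.univ, (0:ℝ) ≤ ∑ l : Fin c, ‖ψ (i,k,l)‖ ^ 2 :=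
      fun k _ => Finset.sum_nonneg (fun l _ => by positivity)
    have hk := (Finset.sum_eq_zero_iff_of_nonneg hnn).mp h k (Finset.mem_univ k)
    have hnn2 : ∀ l ∈ Finset.univ, (0:ℝ) ≤ ‖ψ (i,k,l)‖ ^ 2 := fun l _ => by positivity
    have hl := (Finset.sum_eq_zero_iff_of_nonneg hnn2).mp hk l (Finset.mem_univ l)
    have : ‖ψ (i,k,l)‖ = 0 := by nlinarith [norm_nonneg (ψ (i,k,l))]
    exact norm_eq_zero.mp this
  have key2 : ∀ i k l, k ≠ j₂ → ψ (i,k,l) = 0 := by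
    intro i k l hk
    have h := keysum2 k
    simp only [outer, _root_.stdBasis, if_neg hk, zero_mul, Complex.ofReal_eq_zero] at h
    have hnn : ∀ i ∈ Finset.univ, (0:ℝ) ≤ ∑ l : Fin c, ‖ψ (i,k,l)‖ ^ 2 :=
      fun i _ => Finset.sum_nonneg (fun l _ => by positivity)
    have hi := (Finset.sum_eq_zero_iff_of_nonneg hnn).mp h i (Finset.mem_univ i)
    have hnn2 : ∀ l ∈ Finset.univ, (0:ℝ) ≤ ‖ψ (i,k,l)‖ ^ 2 := fun l _ => by positivity
    have hl := (Finset.sum_eq_zero_iff_of_nonneg hnn2).mp hi l (Finset.mem_univ l)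
    have : ‖ψ (i,k,l)‖ = 0 := by nlinarith [norm_nonneg (ψ (i,k,l))]
    exact norm_eq_zero.mp this
  have hmain : (∑ l : Fin c, ‖ψ (j₁,j₂,l)‖ ^ 2 : ℝ) = 1 := by
    rw [← hψ, Fintype.sum_prod_type]
    rw [Finset.sum_eq_single j₁]
    · rw [Fintype.sum_prod_type, Finset.sum_eq_single j₂]
      · intro k _ hk
        apply Finset.sum_eq_zero
        intro l _
        rw [key2 j₁ k l hk]; simp
      · intro h; exact absurd (Finset.mem_univ j₂) h
    · intro i _ hi
      apply Finset.sum_eq_zero; intro p _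
      rw [key1 i p.1 p.2 hi]; simp
    · intro h; exact absurd (Finset.mem_univ j₁) h
  ext p q
  simp only [ptrFstSnd, outer, _root_.stdBasis]
  by_cases hp1 : p.1 = j₁
  · by_cases hp2 : p.2 = j₂
    · by_cases hq1 : q.1 = j₁
      · by_cases hq2 : q.2 = j₂
        · simp only [if_pos hp1, if_pos hp2, if_pos hq1, if_pos hq2, hp1, hp2, hq1, hq2]
          have : (∑ l : Fin c, ψ (j₁, j₂, l) * star (ψ (j₁, j₂, l))) =
              ((∑ l : Fin c, ‖ψ (j₁,j₂,l)‖ ^ 2 : ℝ) : ℂ) := by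
            push_cast
            exact Finset.sum_congr rfl (fun l _ => mulstar _)
          rw [this, hmain]; norm_num
        · simp only [if_neg hq2, mul_zero, star_zero]
          apply Finset.sum_eq_zero; intro l _
          rw [key2 q.1 q.2 l hq2]; simp
      · simp only [if_neg hq1, zero_mul, star_zero, mul_zero]
        apply Finset.sum_eq_zero; intro l _
        rw [key1 q.1 q.2 l hq1]; simp
    · simp only [if_neg hp2, mul_zero, zero_mul]
      apply Finset.sum_eq_zero; intro l _
      rw [key2 p.1 p.2 l hp2]; simp
  · simp only [if_neg hp1, zero_mul]
    apply Finset.sum_eq_zero; intro l _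
    rw [key1 p.1 p.2 l hp1]; simp
end

section
/- Let m, n ≥ 1 and let X be a unitary matrix indexed by Fin m × Fin n with complex entries. Suppose that for every matrix ρ indexed by Fin m × Fin n, the partial trace over the second factor of X ρ X† equals the partial trace over the second factor of ρ. Then there exists a unitary matrix W indexed by Fin n such that X = 1_m ⊗ W (Kronecker product of the m×m identity with W). (This is the uniqueness direction of the paper's claim that a global evolution operator is valid if and only if it agrees with the one constructed from the local operator, up to unitary operators acting on the traced-out cells N(A)∖A.) -/
open Matrix BigOperators

/-- Kronecker product of an m×m matrix with an n×n matrix. -/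
def kron {m n : ℕ} (A : Matrix (Fin m) (Fin m) ℂ) (B : Matrix (Fin n) (Fin n) ℂ) :
    Matrix (Fin m × Fin n) (Fin m × Fin n) ℂ :=
  fun p q => A p.1 q.1 * B p.2 q.2

theorem stmt_5 {m n : ℕ} (hm : 1 ≤ m) (hn : 1 ≤ n)
    (X : Matrix (Fin m × Fin n) (Fin m × Fin n) ℂ) (hX : Xᴴ * X = 1)
    (h : ∀ ρ : Matrix (Fin m × Fin n) (Fin m × Fin n) ℂ,
      ptr2 (X * ρ * Xᴴ) = ptr2 ρ) :
    ∃ W : Matrix (Fin n) (Fin n) ℂ, Wᴴ * W = 1 ∧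
      X = kron (1 : Matrix (Fin m) (Fin m) ℂ) W := by
  -- Key identity from applying `h` to matrix units
  have key : ∀ (p q : Fin m × Fin n) (a b : Fin m),
      (∑ c : Fin n, X (a, c) p * star (X (b, c) q)) =
        if a = p.1 ∧ b = q.1 ∧ p.2 = q.2 then 1 else 0 := by
    intro p q a b
    have H := congrFun (congrFun
      (h (Matrix.of fun u v => (if u = p then 1 else 0) * (if v = q then 1 else 0))) a) b
    simp only [ptr2, Matrix.mul_apply, Matrix.conjTranspose_apply, mul_ite, ite_mul,
      mul_one, mul_zero, one_mul, zero_mul, Finset.sum_ite_irrel, Finset.sum_const_zero,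
      Finset.sum_ite_eq', Finset.mem_univ, if_true, Matrix.of_apply] at H
    rw [H]
    clear H
    obtain ⟨pi, pk⟩ := p
    obtain ⟨qi, qk⟩ := q
    simp only [Prod.mk.injEq, ite_and, Finset.sum_ite_irrel, Finset.sum_ite_eq',
      Finset.mem_univ, if_true, Finset.sum_const_zero]
    split_ifs <;> simp_all
  -- Off-block entries vanish
  have hzero : ∀ (a i : Fin m) (c k : Fin n), a ≠ i → X (a, c) (i, k) = 0 := by
    intro a i c k hai
    have H := key (i, k) (i, k) a a
    rw [if_neg (show ¬(a = i ∧ a = i ∧ k = k) from fun hc => hai hc.1)] at H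
    have H2 : ∑ c : Fin n, (Complex.normSq (X (a, c) (i, k)) : ℂ) = 0 := by
      rw [← H]
      refine Finset.sum_congr rfl fun c _ => ?_
      rw [Complex.star_def, Complex.mul_conj]
    rw [← Complex.ofReal_sum] at H2
    have H3 : ∑ c : Fin n, Complex.normSq (X (a, c) (i, k)) = 0 :=
      Complex.ofReal_eq_zero.mp H2
    have H4 := (Finset.sum_eq_zero_iff_of_nonneg
      (fun c _ => Complex.normSq_nonneg (X (a, c) (i, k)))).mp H3 c (Finset.mem_univ c)
    exact Complex.normSq_eq_zero.mp H4
  set i0 : Fin m := ⟨0, hm⟩ with hi0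
  set W : Matrix (Fin n) (Fin n) ℂ := fun c k => X (i0, c) (i0, k) with hWdef
  -- Cross relation: Wᴴ * (block i) = 1 for every i
  set Wi : Fin m → Matrix (Fin n) (Fin n) ℂ := fun i c k => X (i, c) (i, k) with hWi
  have hcross : ∀ i : Fin m, Wᴴ * (Wi i) = 1 := by
    intro i
    ext k k'
    have H := key (i, k') (i0, k) i i0
    simp only [eq_self_iff_true, true_and] at H
    rw [Matrix.mul_apply]
    simp only [Matrix.conjTranspose_apply, hWi, hWdef]
    rw [Matrix.one_apply]
    calc (∑ c : Fin n, star (X (i0, c) (i0, k)) * X (i, c) (i, k'))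
        = ∑ c : Fin n, X (i, c) (i, k') * star (X (i0, c) (i0, k)) := by
          refine Finset.sum_congr rfl fun c _ => mul_comm _ _
      _ = if k' = k then 1 else 0 := H
      _ = if k = k' then 1 else 0 := by simp [eq_comm]
  have hW : Wᴴ * W = 1 := hcross i0
  have hWW : W * Wᴴ = 1 := mul_eq_one_comm.mp hW
  have hblock : ∀ i : Fin m, Wi i = W := by
    intro i
    calc Wi i = (W * Wᴴ) * Wi i := by rw [hWW, Matrix.one_mul]
      _ = W * (Wᴴ * Wi i) := by rw [Matrix.mul_assoc]
      _ = W := by rw [hcross i, Matrix.mul_one]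
  refine ⟨W, hW, ?_⟩
  funext p q
  obtain ⟨a, c⟩ := p
  obtain ⟨i, k⟩ := q
  by_cases hai : a = i
  · subst hai
    have := congrFun (congrFun (hblock a) c) k
    simp only [hWi] at this
    simp [kron, Matrix.one_apply_eq, this]
  · simp [kron, Matrix.one_apply_ne hai, hzero a i c k hai]
end

section
/- Let n ≥ 1, let ι be a finite index type, and let A : ι → Matrix (Fin n) (Fin n) ℂ be a finite family of complex matrices. Then the products ((∏_{j : ι} exp(A j / N))^N) converge, as the natural number N tends to infinity, to exp(∑_{j : ι} A j) (Lie–Trotter product formula; the product over ι is taken in a fixed order). (This is the mathematical content of the paper's Theorem 3: a Coloured QCA, which applies the pairwise coupling evolutions e^{-itH_{i,j}} sequentially in time steps of duration Δt, approximates the Continuous-Time QCA generated by the sum of the coupling Hamiltonians as Δt → 0.) -/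
open Matrix BigOperators Filter

open NormedSpace Nat

section helpers

lemma my_list_sum_le {α : Type*} (l : List α) (f g : α → ℝ) (h : ∀ a ∈ l, f a ≤ g a) :
    (l.map f).sum ≤ (l.map g).sum := by
  induction l with
  | nil => simp
  | cons a l ih =>
    simp only [List.map_cons, List.sum_cons]
    exact add_le_add (h a (by simp)) (ih fun b hb => h b (by simp [hb]))

lemma my_list_norm_sum_le {α E : Type*} [SeminormedAddCommGroup E] (l : List α) (f : α → E) :
    ‖(l.map f).sum‖ ≤ (l.map fun a => ‖f a‖).sum := by
  induction l with
  | nil => simp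
  | cons a l ih =>
    simp only [List.map_cons, List.sum_cons]
    exact (norm_add_le _ _).trans (by gcongr)

lemma my_list_sum_nonneg {α : Type*} (l : List α) (f : α → ℝ) (h : ∀ a ∈ l, 0 ≤ f a) :
    0 ≤ (l.map f).sum := by
  induction l with
  | nil => simp
  | cons a l ih =>
    simp only [List.map_cons, List.sum_cons]
    exact add_nonneg (h a (by simp)) (ih fun b hb => h b (by simp [hb]))

lemma my_list_one_add_prod_nonneg {α : Type*} (l : List α) (f : α → ℝ)
    (h : ∀ a ∈ l, 0 ≤ f a) : 1 ≤ (l.map (fun a => 1 + f a)).prod := by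
  induction l with
  | nil => simp
  | cons a l ih =>
    simp only [List.map_cons, List.prod_cons]
    have h1 : (0:ℝ) ≤ f a := h a (by simp)
    have h2 := ih fun b hb => h b (by simp [hb])
    nlinarith

lemma my_list_one_add_le_exp {α : Type*} (l : List α) (f : α → ℝ) (h : ∀ a ∈ l, 0 ≤ f a) :
    (l.map (fun a => 1 + f a)).prod ≤ Real.exp (l.map f).sum := by
  induction l with
  | nil => simp
  | cons a l ih =>
    simp only [List.map_cons, List.prod_cons, List.sum_cons, Real.exp_add]
    have h1 : (0:ℝ) ≤ f a := h a (by simp)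
    have h2 := ih fun b hb => h b (by simp [hb])
    have h3 : 1 + f a ≤ Real.exp (f a) := by linarith [Real.add_one_le_exp (f a)]
    have h4 : (0:ℝ) ≤ (l.map (fun a => 1 + f a)).prod := by
      linarith [my_list_one_add_prod_nonneg l f fun b hb => h b (by simp [hb])]
    exact mul_le_mul h3 h2 h4 (Real.exp_nonneg _)

end helpers

section general

variable {𝕂 𝔸 : Type*} [RCLike 𝕂] [NormedRing 𝔸] [NormedAlgebra 𝕂 𝔸]
  [CompleteSpace 𝔸] [NormOneClass 𝔸]

lemma my_norm_exp_le {𝕂 : Type*} [RCLike 𝕂] [NormedAlgebra 𝕂 𝔸] (x : 𝔸) : ‖exp x‖ ≤ Real.exp ‖x‖ := by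
  rw [exp_eq_tsum 𝕂]
  refine (norm_tsum_le_tsum_norm (norm_expSeries_summable' (𝕂 := 𝕂) x)).trans ?_
  rw [Real.exp_eq_exp_ℝ, exp_eq_tsum ℝ]
  refine Summable.tsum_le_tsum (fun i => ?_) (norm_expSeries_summable' (𝕂 := 𝕂) x)
    (expSeries_summable' (𝕂 := ℝ) ‖x‖)
  rw [norm_smul, smul_eq_mul, norm_inv, RCLike.norm_natCast]
  gcongr
  exact norm_pow_le x i

lemma my_exp_remainder {𝕂 : Type*} [RCLike 𝕂] [NormedAlgebra 𝕂 𝔸] (x : 𝔸) : ‖exp x - 1 - x‖ ≤ ‖x‖ ^ 2 * Real.exp ‖x‖ := by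
  have hs : Summable (fun k : ℕ => (k !⁻¹ : 𝕂) • x ^ k) := expSeries_summable' x
  have h2 := Summable.sum_add_tsum_nat_add 2 hs
  have hrange : (∑ i ∈ Finset.range 2, (i !⁻¹ : 𝕂) • x ^ i) = 1 + x := by
    simp [Finset.sum_range_succ]
  have hexp : exp x - 1 - x = ∑' i : ℕ, ((i + 2)!⁻¹ : 𝕂) • x ^ (i + 2) := by
    simp only [exp_eq_tsum 𝕂]
    rw [← h2, hrange]
    abel
  rw [hexp]
  have hns : Summable (fun i : ℕ => ‖((i + 2)!⁻¹ : 𝕂) • x ^ (i + 2)‖) :=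
    (summable_nat_add_iff 2).mpr (norm_expSeries_summable' (𝕂 := 𝕂) x)
  refine (norm_tsum_le_tsum_norm hns).trans ?_
  have hsumR : Summable (fun i : ℕ => ‖x‖ ^ 2 * ((i ! : ℝ)⁻¹ * ‖x‖ ^ i)) := by
    apply Summable.mul_left
    simpa [div_eq_mul_inv, mul_comm] using Real.summable_pow_div_factorial ‖x‖
  refine (Summable.tsum_le_tsum (fun i => ?_) hns hsumR).trans ?_
  · rw [norm_smul, norm_inv, RCLike.norm_natCast]
    have hfacts : ((i + 2)! : ℝ)⁻¹ ≤ (i ! : ℝ)⁻¹ := by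
      apply inv_anti₀
      · exact_mod_cast Nat.factorial_pos i
      · exact_mod_cast Nat.factorial_le (by omega)
    calc ((i + 2)! : ℝ)⁻¹ * ‖x ^ (i + 2)‖ ≤ (i ! : ℝ)⁻¹ * ‖x‖ ^ (i + 2) :=
          mul_le_mul hfacts (norm_pow_le x (i + 2)) (norm_nonneg _) (by positivity)
      _ = ‖x‖ ^ 2 * ((i ! : ℝ)⁻¹ * ‖x‖ ^ i) := by ring
  · rw [tsum_mul_left]
    have he : ∑' i : ℕ, ((i ! : ℝ)⁻¹ * ‖x‖ ^ i) = Real.exp ‖x‖ := by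
      simp only [Real.exp_eq_exp_ℝ, exp_eq_tsum ℝ, smul_eq_mul]
    rw [he]

lemma my_real_remainder (s : ℝ) (hs : 0 ≤ s) : Real.exp s - 1 - s ≤ s ^ 2 * Real.exp s := by
  have h := my_exp_remainder (𝕂 := ℝ) s
  simp only [Real.norm_eq_abs, abs_of_nonneg hs, ← Real.exp_eq_exp_ℝ] at h
  calc Real.exp s - 1 - s ≤ |Real.exp s - 1 - s| := le_abs_self _
    _ ≤ s ^ 2 * Real.exp s := h

end general

section lists

variable {𝔸 : Type*} [NormedRing 𝔸] [NormOneClass 𝔸]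

lemma my_prod_sub_one (l : List 𝔸) :
    ‖l.prod - 1‖ ≤ (l.map (fun a => 1 + ‖a - 1‖)).prod - 1 := by
  induction l with
  | nil => simp
  | cons a l ih =>
    simp only [List.prod_cons, List.map_cons]
    have key : a * l.prod - 1 = (a - 1) * l.prod + (l.prod - 1) := by noncomm_ring
    rw [key]
    have hP : ‖l.prod‖ ≤ (l.map (fun a => 1 + ‖a - 1‖)).prod := by
      calc ‖l.prod‖ ≤ ‖l.prod - 1‖ + ‖(1:𝔸)‖ := by
            simpa using norm_add_le (l.prod - 1) 1
        _ ≤ ((l.map (fun a => 1 + ‖a - 1‖)).prod - 1) + 1 := by rw [norm_one]; gcongr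
        _ = _ := by ring
    calc ‖(a - 1) * l.prod + (l.prod - 1)‖ ≤ ‖a - 1‖ * ‖l.prod‖ + ‖l.prod - 1‖ :=
          (norm_add_le _ _).trans (add_le_add (norm_mul_le _ _) le_rfl)
      _ ≤ ‖a - 1‖ * (l.map (fun a => 1 + ‖a - 1‖)).prod +
            ((l.map (fun a => 1 + ‖a - 1‖)).prod - 1) := by gcongr
      _ = (1 + ‖a - 1‖) * (l.map (fun a => 1 + ‖a - 1‖)).prod - 1 := by ring

lemma my_prod_estimate (l : List 𝔸) :
    ‖l.prod - 1 - (l.map (fun a => a - 1)).sum‖ ≤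
      (l.map (fun a => 1 + ‖a - 1‖)).prod - 1 - (l.map (fun a => ‖a - 1‖)).sum := by
  induction l with
  | nil => simp
  | cons a l ih =>
    simp only [List.prod_cons, List.map_cons, List.sum_cons]
    have key : a * l.prod - 1 - ((a - 1) + (l.map (fun a => a - 1)).sum) =
        (l.prod - 1 - (l.map (fun a => a - 1)).sum) + (a - 1) * (l.prod - 1) := by
      noncomm_ring
    rw [key]
    have hP := my_prod_sub_one l
    calc ‖(l.prod - 1 - (l.map (fun a => a - 1)).sum) + (a - 1) * (l.prod - 1)‖ ≤
          ‖l.prod - 1 - (l.map (fun a => a - 1)).sum‖ + ‖a - 1‖ * ‖l.prod - 1‖ :=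
          (norm_add_le _ _).trans (add_le_add le_rfl (norm_mul_le _ _))
      _ ≤ ((l.map (fun a => 1 + ‖a - 1‖)).prod - 1 - (l.map (fun a => ‖a - 1‖)).sum) +
            ‖a - 1‖ * ((l.map (fun a => 1 + ‖a - 1‖)).prod - 1) := by gcongr
      _ = (1 + ‖a - 1‖) * (l.map (fun a => 1 + ‖a - 1‖)).prod - 1 -
            (‖a - 1‖ + (l.map (fun a => ‖a - 1‖)).sum) := by ring

lemma my_pow_sub_pow (a b : 𝔸) (K : ℝ) (hK : 1 ≤ K) (ha : ‖a‖ ≤ K) (hb : ‖b‖ ≤ K) (N : ℕ) :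
    ‖a ^ N - b ^ N‖ ≤ N * K ^ N * ‖a - b‖ := by
  induction N with
  | zero => simp
  | succ N ih =>
    have key : a ^ (N + 1) - b ^ (N + 1) = a * (a ^ N - b ^ N) + (a - b) * b ^ N := by
      rw [pow_succ' a N, pow_succ' b N]
      noncomm_ring
    rw [key]
    have hbN : ‖b ^ N‖ ≤ K ^ N := (norm_pow_le b N).trans (pow_le_pow_left₀ (norm_nonneg b) hb N)
    have hKN : (0:ℝ) ≤ K ^ N := by positivity
    calc ‖a * (a ^ N - b ^ N) + (a - b) * b ^ N‖ ≤
          ‖a‖ * ‖a ^ N - b ^ N‖ + ‖a - b‖ * ‖b ^ N‖ :=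
          (norm_add_le _ _).trans (add_le_add (norm_mul_le _ _) (norm_mul_le _ _))
      _ ≤ K * ((N : ℝ) * K ^ N * ‖a - b‖) + ‖a - b‖ * K ^ N :=
          add_le_add (mul_le_mul ha ih (norm_nonneg _) ((norm_nonneg a).trans ha))
            (mul_le_mul_of_nonneg_left hbN (norm_nonneg _))
      _ = (N:ℝ) * K ^ (N + 1) * ‖a - b‖ + K ^ N * ‖a - b‖ := by ring
      _ ≤ (N:ℝ) * K ^ (N + 1) * ‖a - b‖ + K ^ (N + 1) * ‖a - b‖ := by
          have h1 : K ^ N ≤ K ^ (N + 1) := by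
            calc K ^ N = K ^ N * 1 := by ring
              _ ≤ K ^ N * K := by gcongr
              _ = K ^ (N + 1) := by ring
          have h2 : (0:ℝ) ≤ ‖a - b‖ := norm_nonneg _
          nlinarith
      _ = (↑(N + 1)) * K ^ (N + 1) * ‖a - b‖ := by push_cast; ring
      
end lists

section trotter

variable {𝔸 : Type*} [NormedRing 𝔸] [NormedAlgebra ℂ 𝔸] [CompleteSpace 𝔸] [NormOneClass 𝔸]

set_option maxHeartbeats 1000000 in
theorem my_trotter (l : List 𝔸) :
    Tendsto (fun N : ℕ => ((l.map (fun a => exp ((N : ℂ)⁻¹ • a))).prod) ^ N) atTop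
      (nhds (exp l.sum)) := by
  set S : 𝔸 := l.sum with hS
  set g : 𝔸 → ℝ := fun a => ‖a‖ + ‖a‖ ^ 2 * Real.exp ‖a‖ with hg
  set G : ℝ := (l.map g).sum with hG
  set R : ℝ := (l.map (fun a => ‖a‖ ^ 2 * Real.exp ‖a‖)).sum with hR
  have hG0 : 0 ≤ G := my_list_sum_nonneg _ _ (fun a _ => by rw [hg]; positivity)
  have hR0 : 0 ≤ R := my_list_sum_nonneg _ _ (fun a _ => by positivity)
  have hSG : ‖S‖ ≤ G := by
    calc ‖S‖ ≤ (l.map (fun a => ‖a‖)).sum := by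
          simpa using my_list_norm_sum_le l (fun a => a)
      _ ≤ (l.map g).sum := my_list_sum_le _ _ _
          (fun a _ => by rw [hg]; simp; positivity)
  set C : ℝ := G ^ 2 * Real.exp G + R + ‖S‖ ^ 2 * Real.exp ‖S‖ with hC
  have hC0 : 0 ≤ C := by rw [hC]; positivity
  set D : ℝ := Real.exp G * C with hD
  have key : ∀ N : ℕ, 1 ≤ N →
      ‖((l.map (fun a => exp ((N : ℂ)⁻¹ • a))).prod) ^ N - exp S‖ ≤ D / N := by
    intro N hN
    have hN0 : (N : ℝ) ≠ 0 := by positivity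
    have hNC : (N : ℂ) ≠ 0 := by exact_mod_cast Nat.cast_ne_zero.mpr (by omega)
    set t : ℝ := (N : ℝ)⁻¹ with htdef
    have ht0 : 0 ≤ t := by positivity
    have ht1 : t ≤ 1 := by
      rw [htdef]
      exact inv_le_one_of_one_le₀ (by exact_mod_cast hN)
    have hu : ∀ a : 𝔸, ‖(N : ℂ)⁻¹ • a‖ = t * ‖a‖ := fun a => by
      rw [norm_smul, norm_inv, Complex.norm_natCast]
    set lN : List 𝔸 := l.map (fun a => exp ((N : ℂ)⁻¹ • a)) with hlN
    set x : 𝔸 := lN.prod with hx_def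
    set y : 𝔸 := exp ((N : ℂ)⁻¹ • S) with hy_def
    -- per element estimates
    have hra : ∀ a ∈ l, ‖exp ((N : ℂ)⁻¹ • a) - 1 - (N : ℂ)⁻¹ • a‖ ≤
        t ^ 2 * (‖a‖ ^ 2 * Real.exp ‖a‖) := by
      intro a _
      refine (my_exp_remainder (𝕂 := ℂ) _).trans ?_
      rw [hu]
      have hta : t * ‖a‖ ≤ ‖a‖ := by nlinarith [norm_nonneg a]
      calc (t * ‖a‖) ^ 2 * Real.exp (t * ‖a‖) ≤ (t * ‖a‖) ^ 2 * Real.exp ‖a‖ := by gcongr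
        _ = t ^ 2 * (‖a‖ ^ 2 * Real.exp ‖a‖) := by ring
    have hda : ∀ a ∈ l, ‖exp ((N : ℂ)⁻¹ • a) - 1‖ ≤ t * g a := by
      intro a ha
      have h1 := hra a ha
      have ht2 : t ^ 2 ≤ t := by nlinarith
      calc ‖exp ((N : ℂ)⁻¹ • a) - 1‖ ≤
            ‖exp ((N : ℂ)⁻¹ • a) - 1 - (N : ℂ)⁻¹ • a‖ + ‖(N : ℂ)⁻¹ • a‖ := by
            simpa using norm_add_le (exp ((N : ℂ)⁻¹ • a) - 1 - (N : ℂ)⁻¹ • a) ((N : ℂ)⁻¹ • a)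
        _ ≤ t ^ 2 * (‖a‖ ^ 2 * Real.exp ‖a‖) + t * ‖a‖ := add_le_add h1 (le_of_eq (hu a))
        _ ≤ t * (‖a‖ ^ 2 * Real.exp ‖a‖) + t * ‖a‖ := by
            have : (0:ℝ) ≤ ‖a‖ ^ 2 * Real.exp ‖a‖ := by positivity
            nlinarith
        _ = t * g a := by rw [hg]; ring
    -- the sum s of the deviations of the factors from 1
    set s : ℝ := (lN.map (fun b => ‖b - 1‖)).sum with hs_def
    have hs_eq : s = (l.map (fun a => ‖exp ((N : ℂ)⁻¹ • a) - 1‖)).sum := by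
      rw [hs_def, hlN, List.map_map]
      rfl
    have hs0 : 0 ≤ s := by
      rw [hs_def]
      exact my_list_sum_nonneg _ _ (fun b _ => norm_nonneg _)
    have hsG : s ≤ t * G := by
      rw [hs_eq]
      refine (my_list_sum_le l _ (fun a => t * g a) hda).trans ?_
      rw [List.sum_map_mul_left, hG]
    have hQ : (lN.map (fun b => 1 + ‖b - 1‖)).prod ≤ Real.exp s := by
      rw [hs_def]
      exact my_list_one_add_le_exp lN (fun b => ‖b - 1‖) (fun b _ => norm_nonneg _)
    -- first order bound on x
    have hx1 : ‖x - 1 - (lN.map (fun b => b - 1)).sum‖ ≤ t ^ 2 * (G ^ 2 * Real.exp G) := by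
      have h1 := my_prod_estimate lN
      have h2 := my_real_remainder s hs0
      have h3 : s ^ 2 * Real.exp s ≤ t ^ 2 * (G ^ 2 * Real.exp G) := by
        have htG : t * G ≤ G := by nlinarith
        calc s ^ 2 * Real.exp s ≤ (t * G) ^ 2 * Real.exp (t * G) := by gcongr
          _ ≤ (t * G) ^ 2 * Real.exp G := by gcongr
          _ = t ^ 2 * (G ^ 2 * Real.exp G) := by ring
      have h4 : (lN.map (fun b => 1 + ‖b - 1‖)).prod - 1 - s ≤ s ^ 2 * Real.exp s := by
        have := Real.add_one_le_exp s
        linarith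
      rw [hx_def]
      calc ‖lN.prod - 1 - (lN.map (fun b => b - 1)).sum‖ ≤
            (lN.map (fun b => 1 + ‖b - 1‖)).prod - 1 - s := by rw [hs_def] at *; exact h1
        _ ≤ s ^ 2 * Real.exp s := h4
        _ ≤ t ^ 2 * (G ^ 2 * Real.exp G) := h3
    -- identify the sum of the deviations
    have hsum : (lN.map (fun b => b - 1)).sum =
        (N : ℂ)⁻¹ • S + (l.map (fun a => exp ((N : ℂ)⁻¹ • a) - 1 - (N : ℂ)⁻¹ • a)).sum := by
      rw [hlN, List.map_map]
      have heq : ((fun b : 𝔸 => b - 1) ∘ fun a => exp ((N : ℂ)⁻¹ • a)) =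
          fun a => (exp ((N : ℂ)⁻¹ • a) - 1 - (N : ℂ)⁻¹ • a) + (N : ℂ)⁻¹ • a := by
        funext a
        simp [Function.comp]
      rw [heq, List.sum_map_add]
      have : (l.map (fun a => (N : ℂ)⁻¹ • a)).sum = (N : ℂ)⁻¹ • S := by
        rw [hS, List.smul_sum]
      rw [this]
      abel
    have hE : ‖(l.map (fun a => exp ((N : ℂ)⁻¹ • a) - 1 - (N : ℂ)⁻¹ • a)).sum‖ ≤ t ^ 2 * R := by
      refine (my_list_norm_sum_le _ _).trans ?_
      refine (my_list_sum_le l _ (fun a => t ^ 2 * (‖a‖ ^ 2 * Real.exp ‖a‖)) hra).trans ?_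
      rw [List.sum_map_mul_left, hR]
    have hx2 : ‖x - 1 - (N : ℂ)⁻¹ • S‖ ≤ t ^ 2 * (G ^ 2 * Real.exp G) + t ^ 2 * R := by
      have hdecomp : x - 1 - (N : ℂ)⁻¹ • S = (x - 1 - (lN.map (fun b => b - 1)).sum) +
          (l.map (fun a => exp ((N : ℂ)⁻¹ • a) - 1 - (N : ℂ)⁻¹ • a)).sum := by
        rw [hsum]
        abel
      rw [hdecomp]
      exact (norm_add_le _ _).trans (add_le_add hx1 hE)
    have hy2 : ‖y - 1 - (N : ℂ)⁻¹ • S‖ ≤ t ^ 2 * (‖S‖ ^ 2 * Real.exp ‖S‖) := by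
      rw [hy_def]
      refine (my_exp_remainder (𝕂 := ℂ) _).trans ?_
      rw [hu]
      have htS : t * ‖S‖ ≤ ‖S‖ := by nlinarith [norm_nonneg S]
      calc (t * ‖S‖) ^ 2 * Real.exp (t * ‖S‖) ≤ (t * ‖S‖) ^ 2 * Real.exp ‖S‖ := by gcongr
        _ = t ^ 2 * (‖S‖ ^ 2 * Real.exp ‖S‖) := by ring
    have hxy : ‖x - y‖ ≤ t ^ 2 * C := by
      have hdecomp : x - y = (x - 1 - (N : ℂ)⁻¹ • S) - (y - 1 - (N : ℂ)⁻¹ • S) := by abel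
      have hCeq : t ^ 2 * C =
          (t ^ 2 * (G ^ 2 * Real.exp G) + t ^ 2 * R) + t ^ 2 * (‖S‖ ^ 2 * Real.exp ‖S‖) := by
        rw [hC]; ring
      rw [hdecomp, hCeq]
      exact (norm_sub_le _ _).trans (add_le_add hx2 hy2)
    -- norm bounds on x and y
    have hxn : ‖x‖ ≤ Real.exp (t * G) := by
      have h1 := my_prod_sub_one lN
      have h2 : ‖x‖ ≤ ‖x - 1‖ + 1 := by
        simpa using (norm_add_le (x - 1) 1).trans (by rw [norm_one])
      have h3 : ‖x‖ ≤ (lN.map (fun b => 1 + ‖b - 1‖)).prod := by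
        rw [hx_def] at h2 ⊢
        linarith
      exact h3.trans (hQ.trans (Real.exp_le_exp.mpr hsG))
    have hyn : ‖y‖ ≤ Real.exp (t * G) := by
      rw [hy_def]
      refine (my_norm_exp_le (𝕂 := ℂ) _).trans ?_
      rw [hu]
      exact Real.exp_le_exp.mpr (mul_le_mul_of_nonneg_left hSG ht0)
    set K : ℝ := Real.exp (t * G) with hK
    have hK1 : 1 ≤ K := Real.one_le_exp (by positivity)
    have hpow := my_pow_sub_pow x y K hK1 hxn hyn N
    have hKN : K ^ N = Real.exp G := by
      rw [hK, ← Real.exp_nat_mul]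
      congr 1
      rw [htdef]
      field_simp
    have hyN : y ^ N = exp S := by
      letI : NormedAlgebra ℚ 𝔸 := NormedAlgebra.restrictScalars ℚ ℂ 𝔸
      rw [hy_def, ← NormedSpace.exp_nsmul, ← Nat.cast_smul_eq_nsmul ℂ, smul_smul, mul_inv_cancel₀ hNC, one_smul]
    calc ‖((l.map (fun a => exp ((N : ℂ)⁻¹ • a))).prod) ^ N - exp S‖
        = ‖x ^ N - y ^ N‖ := by rw [hyN, hx_def, hlN]
      _ ≤ (N : ℝ) * K ^ N * ‖x - y‖ := hpow
      _ ≤ (N : ℝ) * K ^ N * (t ^ 2 * C) := by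
          refine mul_le_mul_of_nonneg_left hxy ?_
          have : (0:ℝ) ≤ K ^ N := by positivity
          positivity
      _ = D / N := by
          rw [hKN, hD, htdef]
          field_simp
  have h0 : Tendsto (fun N : ℕ =>
      ((l.map (fun a => exp ((N : ℂ)⁻¹ • a))).prod) ^ N - exp S) atTop (nhds 0) := by
    apply squeeze_zero_norm' ?_ (tendsto_const_div_atTop_nhds_zero_nat D)
    filter_upwards [eventually_ge_atTop 1] with N hN
    exact key N hN
  have h1 := h0.add_const (exp S)
  simpa using h1

end trotter

theorem stmt_8 {n : ℕ} (hn : 1 ≤ n)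
    {ι : Type*} [Fintype ι] [LinearOrder ι]
    (A : ι → Matrix (Fin n) (Fin n) ℂ) :
    Tendsto
      (fun N : ℕ =>
        (((Finset.univ : Finset ι).sort (· ≤ ·)).map
            (fun j => NormedSpace.exp (((N : ℂ))⁻¹ • A j))).prod ^ N)
      atTop
      (nhds (NormedSpace.exp (∑ j : ι, A j))) := by
  haveI : Nonempty (Fin n) := ⟨⟨0, hn⟩⟩
  letI : SeminormedRing (Matrix (Fin n) (Fin n) ℂ) := Matrix.linftyOpSemiNormedRing
  letI : NormedRing (Matrix (Fin n) (Fin n) ℂ) := Matrix.linftyOpNormedRing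
  letI : NormedAlgebra ℂ (Matrix (Fin n) (Fin n) ℂ) := Matrix.linftyOpNormedAlgebra
  letI : NormOneClass (Matrix (Fin n) (Fin n) ℂ) := Matrix.linfty_opNormOneClass
  have h := my_trotter (𝔸 := Matrix (Fin n) (Fin n) ℂ)
    (((Finset.univ : Finset ι).sort (· ≤ ·)).map A)
  have hsum : ((((Finset.univ : Finset ι).sort (· ≤ ·)).map A)).sum = ∑ j : ι, A j := by
    rw [Finset.sum_eq_multiset_sum, ← Finset.sort_eq (Finset.univ : Finset ι) (· ≤ ·),
      Multiset.map_coe, Multiset.sum_coe]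
  rw [hsum] at h
  simp only [List.map_map, Function.comp_def] at h
  exact h
end
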